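/- Let n be a positive integer and let u : ℤ → ℝ be supported on {-n, ..., n}, symmetric (u(-k) = u(k) for all k), normalized so that ∑_{k=-n}^{n} u(k) = 1, and with nonnegative Fourier transform, i.e., û(ξ) = ∑_{k=-n}^{n} u(k) e^{-ikξ} is real and nonnegative for every ξ ∈ ℝ. Then sup over all nonzero f ∈ ℓ²(ℤ) of ‖Δ(f*u)‖₂ / ‖f‖₂ is at least 4/(n+1)². -/

import Mathlib

open scoped BigOperators

/-- Convolution of `f ∈ ℓ²(ℤ)` with a finitely supported kernel `u : ℤ → ℝ`:
`(f*u)(m) = ∑_{k} u(k) f(m-k)`. -/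
noncomputable def conv (u : ℤ → ℝ) (f : ℤ → ℂ) : ℤ → ℂ :=
  fun m => ∑' k : ℤ, (u k : ℂ) * f (m - k)

/-- The `ℓ²`-norm `(∑_{k∈ℤ} |f(k)|²)^{1/2}`. -/
noncomputable def l2norm (f : ℤ → ℂ) : ℝ :=
  Real.sqrt (∑' k : ℤ, ‖f k‖ ^ 2)

/-- The discrete derivative `(∇f)(k) = f(k+1) - f(k)`. -/
def dgrad (f : ℤ → ℂ) : ℤ → ℂ := fun k => f (k + 1) - f k

/-- The discrete Laplacian `(Δf)(k) = f(k+2) - 2f(k+1) + f(k)`. -/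
def dlap (f : ℤ → ℂ) : ℤ → ℂ := fun k => f (k + 2) - 2 * f (k + 1) + f k

section Aux

open Complex Finset


private lemma geom_node_sum (m : ℕ) (hm : 0 < m) (t : ℤ) (ht : ¬ ((m:ℤ) ∣ t)) (a : ℝ) :
    ∑ j ∈ Finset.range m, Complex.exp (Complex.I * t * (a + 2*Real.pi*j/m)) = 0 := by
  have hmC : ((m:ℂ)) ≠ 0 := Nat.cast_ne_zero.mpr hm.ne'
  have h1 : ∀ j ∈ Finset.range m, Complex.exp (Complex.I * t * (a + 2*Real.pi*j/m))
      = Complex.exp (Complex.I*t*a) * (Complex.exp (Complex.I * t * (2*Real.pi/m)))^j := by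
    intro j hj
    rw [← Complex.exp_nat_mul, ← Complex.exp_add]
    congr 1
    field_simp
  rw [Finset.sum_congr rfl h1, ← Finset.mul_sum]
  have hq1 : Complex.exp (Complex.I * t * (2*Real.pi/m)) ≠ 1 := by
    intro h
    obtain ⟨k, hk⟩ := Complex.exp_eq_one_iff.mp h
    apply ht
    refine ⟨k, ?_⟩
    have hπ : ((Real.pi:ℂ)) ≠ 0 := by exact_mod_cast Real.pi_ne_zero
    have ht' : (t : ℂ) = (m:ℂ) * k := by
      field_simp at hk
      have h2 : (2:ℂ) * Real.pi * Complex.I ≠ 0 := by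
        simp [hπ, Complex.I_ne_zero]
      apply mul_left_cancel₀ h2
      linear_combination (2 * (Real.pi:ℂ) * Complex.I) * hk
    exact_mod_cast ht'
  have hqm : (Complex.exp (Complex.I * t * (2*Real.pi/m)))^m = 1 := by
    rw [← Complex.exp_nat_mul]
    rw [show (m:ℂ) * (Complex.I * t * (2*Real.pi/m)) = (t:ℂ) * (2*Real.pi*Complex.I) by
      field_simp]
    exact_mod_cast Complex.exp_int_mul_two_pi_mul_I t
  rw [geom_sum_eq hq1, hqm]
  simp

private lemma exp_I_ne_one (x : ℝ) (h0 : 0 < x) (h2 : x < 2*Real.pi) :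
    Complex.exp (Complex.I * (x:ℂ)) ≠ 1 := by
  intro h
  obtain ⟨k, hk⟩ := Complex.exp_eq_one_iff.mp h
  have him := congrArg Complex.im hk
  simp [Complex.mul_im] at him
  -- him : x = k * 2π  (roughly)
  rcases le_or_gt k 0 with h0' | h0'
  · have : (k:ℝ) ≤ 0 := by exact_mod_cast h0'
    nlinarith [Real.pi_pos]
  · have h1 : (1:ℤ) ≤ k := h0'
    have : (1:ℝ) ≤ k := by exact_mod_cast h1
    nlinarith [Real.pi_pos]

private lemma csc_sum (m : ℕ) (hm : 0 < m) (η : ℕ → ℝ)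
    (hη : ∀ j, η j = (2*(j:ℝ)+1) * Real.pi / m) :
    ∑ j ∈ Finset.range m, 4 / ‖Complex.exp (Complex.I * ((η j : ℝ) : ℂ)) - 1‖^2
      = (m:ℝ)^2 := by
  have hmR : (0:ℝ) < m := by exact_mod_cast hm
  have hmC : ((m:ℂ)) ≠ 0 := Nat.cast_ne_zero.mpr hm.ne'
  set ζ : ℕ → ℂ := fun j => Complex.exp (Complex.I * ((η j : ℝ) : ℂ)) with hζdef
  set w : ℕ → ℂ := fun j => ∑ r ∈ Finset.range m, (ζ j)^r with hwdef
  have hζm : ∀ j, (ζ j)^m = -1 := by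
    intro j
    rw [hζdef]
    simp only []
    rw [← Complex.exp_nat_mul]
    rw [show ((m:ℂ)) * (Complex.I * ((η j : ℝ):ℂ)) = ((2*(j:ℕ)+1 : ℕ)) * (Real.pi * Complex.I) by
      rw [hη j]; push_cast; field_simp]
    rw [Complex.exp_nat_mul, Complex.exp_pi_mul_I]
    exact Odd.neg_one_pow ⟨j, by ring⟩
  have hζ1 : ∀ j ∈ Finset.range m, ζ j ≠ 1 := by
    intro j hj
    apply exp_I_ne_one
    · rw [hη j]; positivity
    · rw [hη j, div_lt_iff₀ hmR]
      have hj' : (j:ℝ) + 1 ≤ m := by exact_mod_cast Finset.mem_range.mp hj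
      nlinarith [Real.pi_pos]
  have hw : ∀ j, w j * (ζ j - 1) = -2 := by
    intro j
    rw [hwdef]
    simp only []
    rw [geom_sum_mul, hζm j]
    ring
  have hwn : ∀ j ∈ Finset.range m, 4 / ‖ζ j - 1‖^2 = ‖w j‖^2 := by
    intro j hj
    have hne : ζ j - 1 ≠ 0 := sub_ne_zero.mpr (hζ1 j hj)
    have hnorm : ‖w j‖ * ‖ζ j - 1‖ = 2 := by
      rw [← norm_mul, hw j]
      simp
    have h2 : ‖ζ j - 1‖ ≠ 0 := norm_ne_zero_iff.mpr hne
    rw [div_eq_iff (pow_ne_zero 2 h2), ← mul_pow]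
    nlinarith [hnorm]
  rw [Finset.sum_congr rfl hwn]
  -- geometric vanishing for r ≠ s
  have hgeo : ∀ r s : ℕ, r < m → s < m → r ≠ s →
      ∑ j ∈ Finset.range m,
        Complex.exp (Complex.I * ((r:ℂ) - (s:ℂ)) * ((Real.pi:ℂ)/m + 2*(Real.pi:ℂ)*j/m)) = 0 := by
    intro r s hr hs hrs
    have hdvd : ¬ ((m:ℤ) ∣ ((r:ℤ) - (s:ℤ))) := by
      intro hd
      have hne : ((r:ℤ) - (s:ℤ)) ≠ 0 := sub_ne_zero.mpr (by exact_mod_cast hrs)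
      have h1 : ((m:ℤ)) ≤ |(r:ℤ) - (s:ℤ)| := Int.le_of_dvd (abs_pos.mpr hne) ((dvd_abs _ _).mpr hd)
      have h2 : |(r:ℤ) - (s:ℤ)| < m := abs_sub_lt_iff.mpr ⟨by omega, by omega⟩
      exact absurd (h1.trans_lt h2) (lt_irrefl _)
    have h := geom_node_sum m hm ((r:ℤ) - (s:ℤ)) hdvd (Real.pi/m)
    rw [← h]
    apply Finset.sum_congr rfl
    intro j _
    congr 1
    push_cast
    ring
  -- main complex identity
  have hkey : ∑ j ∈ Finset.range m, (w j * (starRingEnd ℂ) (w j)) = ((m:ℂ))^2 := by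
    have hterm : ∀ j ∈ Finset.range m, w j * (starRingEnd ℂ) (w j)
        = ∑ r ∈ Finset.range m, ∑ s ∈ Finset.range m,
            Complex.exp (Complex.I * ((r:ℂ) - (s:ℂ)) * ((Real.pi:ℂ)/m + 2*(Real.pi:ℂ)*j/m)) := by
      intro j hj
      rw [hwdef]
      simp only [map_sum, Finset.sum_mul_sum]
      apply Finset.sum_congr rfl; intro r _
      apply Finset.sum_congr rfl; intro s _
      rw [hζdef]
      simp only []
      rw [map_pow, ← Complex.exp_conj, ← Complex.exp_nat_mul, ← Complex.exp_nat_mul,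
        ← Complex.exp_add]
      congr 1
      rw [map_mul, Complex.conj_I, Complex.conj_ofReal]
      rw [hη j]
      push_cast
      field_simp
      ring
    rw [Finset.sum_congr rfl hterm, Finset.sum_comm]
    have hout : ∀ r ∈ Finset.range m,
        (∑ j ∈ Finset.range m, ∑ s ∈ Finset.range m,
          Complex.exp (Complex.I * ((r:ℂ) - (s:ℂ)) * ((Real.pi:ℂ)/m + 2*(Real.pi:ℂ)*j/m)))
        = (m:ℂ) := by
      intro r hr
      rw [Finset.sum_comm]
      have hinner : ∀ s ∈ Finset.range m,
          (∑ j ∈ Finset.range m,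
            Complex.exp (Complex.I * ((r:ℂ) - (s:ℂ)) * ((Real.pi:ℂ)/m + 2*(Real.pi:ℂ)*j/m)))
          = if r = s then (m:ℂ) else 0 := by
        intro s hs
        by_cases hrs : r = s
        · subst hrs
          simp
        · rw [if_neg hrs]
          exact hgeo r s (Finset.mem_range.mp hr) (Finset.mem_range.mp hs) hrs
      rw [Finset.sum_congr rfl hinner, Finset.sum_ite_eq]
      simp [hr]
    rw [Finset.sum_congr rfl hout]
    simp [Finset.sum_const, Finset.card_range]
    ring
  -- pass to real parts
  have hre : ∀ j, w j * (starRingEnd ℂ) (w j) = ((‖w j‖^2 : ℝ) : ℂ) := by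
    intro j
    rw [Complex.mul_conj]
    norm_cast
    rw [Complex.normSq_eq_norm_sq]
  rw [Finset.sum_congr rfl (fun j _ => hre j)] at hkey
  push_cast at hkey ⊢
  exact_mod_cast hkey

private lemma node_sum (n : ℕ) (u : ℤ → ℝ) (hsupp : ∀ k : ℤ, (n : ℤ) < |k| → u k = 0) (a : ℝ) :
    ∑ j ∈ Finset.range (n+1), ∑ k ∈ Finset.Icc (-(n:ℤ)) (n:ℤ),
      (u k : ℂ) * Complex.exp (-(Complex.I) * (k:ℂ) *
        ((a + 2*Real.pi*(j:ℝ)/((n:ℝ)+1) : ℝ) : ℂ))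
    = ((n:ℂ)+1) * (u 0 : ℝ) := by
  rw [Finset.sum_comm]
  rw [Finset.sum_eq_single (0:ℤ)]
  · simp
  · intro k hk hk0
    have hdvd : ¬ (((n+1:ℕ):ℤ) ∣ (-k)) := by
      intro hd
      have h1 : ((n+1:ℕ):ℤ) ≤ |(-k)| :=
        Int.le_of_dvd (abs_pos.mpr (by simpa using hk0)) ((dvd_abs _ _).mpr hd)
      rw [abs_neg] at h1
      rw [Finset.mem_Icc] at hk
      have : |k| ≤ (n:ℤ) := abs_le.mpr ⟨hk.1, hk.2⟩
      omega
    have h0 := geom_node_sum (n+1) (Nat.succ_pos n) (-k) hdvd a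
    have h1 : ∀ j ∈ Finset.range (n+1),
        (u k : ℂ) * Complex.exp (-(Complex.I) * (k:ℂ) *
          ((a + 2*Real.pi*(j:ℝ)/((n:ℝ)+1) : ℝ) : ℂ))
        = (u k : ℂ) * Complex.exp (Complex.I * ((-k : ℤ):ℂ) *
            ((a:ℂ) + 2*(Real.pi:ℂ)*(j:ℂ)/(((n+1:ℕ)):ℂ))) := by
      intro j hj
      congr 2
      push_cast
      ring
    rw [Finset.sum_congr rfl h1, ← Finset.mul_sum]
    rw [h0, mul_zero]
  · intro h
    exfalso
    apply h
    simp

private lemma exists_good_node (n : ℕ) (u : ℤ → ℝ)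
    (hsupp : ∀ k : ℤ, (n : ℤ) < |k| → u k = 0)
    (hnorm : ∑ k ∈ Finset.Icc (-(n : ℤ)) (n : ℤ), u k = 1)
    (hFTpos : ∀ ξ : ℝ, ∃ r : ℝ, 0 ≤ r ∧
      ∑ k ∈ Finset.Icc (-(n : ℤ)) (n : ℤ),
        (u k : ℂ) * Complex.exp (-(Complex.I) * (k : ℂ) * (ξ : ℂ)) = (r : ℂ)) :
    ∃ (ξ₀ r₀ : ℝ), 0 ≤ r₀ ∧
      (∑ k ∈ Finset.Icc (-(n : ℤ)) (n : ℤ),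
        (u k : ℂ) * Complex.exp (-(Complex.I) * (k : ℂ) * (ξ₀ : ℂ)) = (r₀ : ℂ)) ∧
      4 / ((n:ℝ)+1)^2 ≤ ‖Complex.exp (Complex.I * (ξ₀:ℂ)) - 1‖^2 * r₀ := by
  choose r hr hru using hFTpos
  set η : ℕ → ℝ := fun j => (2*(j:ℝ)+1) * Real.pi / (n+1) with hηdef
  have hang1 : ∀ j : ℕ, (Real.pi/((n:ℝ)+1) + 2*Real.pi*(j:ℝ)/((n:ℝ)+1)) = η j := by
    intro j; rw [hηdef]; field_simp; ring
  have hA := node_sum n u hsupp 0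
  have hB := node_sum n u hsupp (Real.pi/((n:ℝ)+1))
  have hAr : ∑ j ∈ Finset.range (n+1), r ((0:ℝ) + 2*Real.pi*(j:ℝ)/((n:ℝ)+1))
      = ((n:ℝ)+1) * u 0 := by
    have h : ∑ j ∈ Finset.range (n+1),
        ((r ((0:ℝ) + 2*Real.pi*(j:ℝ)/((n:ℝ)+1)) : ℝ) : ℂ) = ((n:ℂ)+1) * (u 0 : ℝ) := by
      rw [← hA]
      exact Finset.sum_congr rfl (fun j _ => (hru _).symm)
    exact_mod_cast h
  have hBr : ∑ j ∈ Finset.range (n+1), r (Real.pi/((n:ℝ)+1) + 2*Real.pi*(j:ℝ)/((n:ℝ)+1))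
      = ((n:ℝ)+1) * u 0 := by
    have h : ∑ j ∈ Finset.range (n+1),
        ((r (Real.pi/((n:ℝ)+1) + 2*Real.pi*(j:ℝ)/((n:ℝ)+1)) : ℝ) : ℂ)
        = ((n:ℂ)+1) * (u 0 : ℝ) := by
      rw [← hB]
      exact Finset.sum_congr rfl (fun j _ => (hru _).symm)
    exact_mod_cast h
  have hr0 : r 0 = 1 := by
    have h1 : ((r 0 : ℝ) : ℂ) = ((1:ℝ):ℂ) := by
      rw [← hru 0]
      rw [show ((1:ℝ):ℂ) = ((∑ k ∈ Finset.Icc (-(n : ℤ)) (n : ℤ), u k : ℝ) : ℂ) by rw [hnorm]]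
      push_cast
      exact Finset.sum_congr rfl (fun k _ => by simp)
    exact_mod_cast h1
  have hsum1 : 1 ≤ ∑ j ∈ Finset.range (n+1), r (η j) := by
    have h0mem : (0:ℕ) ∈ Finset.range (n+1) := by simp
    have hge : r ((0:ℝ) + 2*Real.pi*((0:ℕ):ℝ)/((n:ℝ)+1))
        ≤ ∑ j ∈ Finset.range (n+1), r ((0:ℝ) + 2*Real.pi*(j:ℝ)/((n:ℝ)+1)) :=
      Finset.single_le_sum (f := fun j : ℕ => r ((0:ℝ) + 2*Real.pi*(j:ℝ)/((n:ℝ)+1)))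
        (fun j _ => hr _) h0mem
    have hzero : ((0:ℝ) + 2*Real.pi*((0:ℕ):ℝ)/((n:ℝ)+1)) = 0 := by simp
    rw [hzero, hr0] at hge
    have heq : ∑ j ∈ Finset.range (n+1), r (Real.pi/((n:ℝ)+1) + 2*Real.pi*(j:ℝ)/((n:ℝ)+1))
        = ∑ j ∈ Finset.range (n+1), r (η j) :=
      Finset.sum_congr rfl (fun j _ => by rw [hang1 j])
    calc (1:ℝ) ≤ ((n:ℝ)+1) * u 0 := by rw [← hAr]; exact hge
    _ = ∑ j ∈ Finset.range (n+1), r (η j) := by rw [← heq, hBr]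
  have hcsc := csc_sum (n+1) (Nat.succ_pos n) η (by intro j; rw [hηdef]; push_cast; ring)
  have hcpos : ∀ j ∈ Finset.range (n+1),
      0 < ‖Complex.exp (Complex.I * ((η j : ℝ):ℂ)) - 1‖^2 := by
    intro j hj
    have hne : Complex.exp (Complex.I * ((η j : ℝ):ℂ)) - 1 ≠ 0 := by
      apply sub_ne_zero.mpr
      apply exp_I_ne_one
      · rw [hηdef]; positivity
      · rw [hηdef]
        simp only []
        rw [div_lt_iff₀ (by positivity)]
        have hj' : (j:ℝ) + 1 ≤ (n:ℝ)+1 := by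
          exact_mod_cast Nat.succ_le_of_lt (Finset.mem_range.mp hj)
        nlinarith [Real.pi_pos]
    have := norm_pos_iff.mpr hne
    positivity
  -- pigeonhole
  have hex : ∃ j ∈ Finset.range (n+1),
      4 / ((n:ℝ)+1)^2 ≤ ‖Complex.exp (Complex.I * ((η j : ℝ):ℂ)) - 1‖^2 * r (η j) := by
    by_contra hcon
    push_neg at hcon
    have hlt : ∀ j ∈ Finset.range (n+1),
        r (η j) < (4 / ‖Complex.exp (Complex.I * ((η j : ℝ):ℂ)) - 1‖^2) / ((n:ℝ)+1)^2 := by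
      intro j hj
      have h1 := hcon j hj
      have h2 := hcpos j hj
      rw [div_div, lt_div_iff₀ (by positivity)]
      rw [lt_div_iff₀ (by positivity : (0:ℝ) < ((n:ℝ)+1)^2)] at h1
      calc r (η j) * (‖Complex.exp (Complex.I * ((η j : ℝ):ℂ)) - 1‖^2 * ((n:ℝ)+1)^2)
          = ‖Complex.exp (Complex.I * ((η j : ℝ):ℂ)) - 1‖^2 * r (η j) * ((n:ℝ)+1)^2 := by ring
        _ < 4 := h1
    have hstrict : ∑ j ∈ Finset.range (n+1), r (η j)
        < ∑ j ∈ Finset.range (n+1),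
            (4 / ‖Complex.exp (Complex.I * ((η j : ℝ):ℂ)) - 1‖^2) / ((n:ℝ)+1)^2 :=
      Finset.sum_lt_sum_of_nonempty (Finset.nonempty_range_iff.mpr (Nat.succ_ne_zero n)) hlt
    rw [← Finset.sum_div] at hstrict
    push_cast at hcsc
    rw [hcsc, div_self (by positivity : ((n:ℝ)+1)^2 ≠ 0)] at hstrict
    linarith
  obtain ⟨j, hj, hgood⟩ := hex
  exact ⟨η j, r (η j), hr _, hru _, hgood⟩

private lemma norm_exp_re_zero (z : ℂ) (hz : z.re = 0) : ‖Complex.exp z‖ = 1 := by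
  rw [Complex.norm_exp, hz, Real.exp_zero]

private lemma conv_eq_sum (n : ℕ) (u : ℤ → ℝ)
    (hsupp : ∀ k : ℤ, (n : ℤ) < |k| → u k = 0) (f : ℤ → ℂ) (m : ℤ) :
    conv u f m = ∑ k ∈ Finset.Icc (-(n:ℤ)) (n:ℤ), (u k : ℂ) * f (m - k) := by
  apply tsum_eq_sum
  intro k hk
  have habs : (n:ℤ) < |k| := by
    rw [Finset.mem_Icc] at hk
    rcases abs_cases k with ⟨h1, h2⟩ | ⟨h1, h2⟩ <;> omega
  rw [hsupp k habs]
  simp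

private lemma test_ratio (n : ℕ) (u : ℤ → ℝ)
    (hsupp : ∀ k : ℤ, (n : ℤ) < |k| → u k = 0)
    (ξ₀ r₀ : ℝ) (hr₀ : 0 ≤ r₀)
    (hFT : ∑ k ∈ Finset.Icc (-(n : ℤ)) (n : ℤ),
        (u k : ℂ) * Complex.exp (-(Complex.I) * (k : ℂ) * (ξ₀ : ℂ)) = (r₀ : ℂ))
    (M : ℕ) :
    ∃ f : ℤ → ℂ, Memℓp f 2 ∧ f ≠ 0 ∧
      (r₀ * ‖Complex.exp (Complex.I * (ξ₀:ℂ)) - 1‖^2) *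
        Real.sqrt (((M:ℝ)+1)/((M:ℝ)+2*(n:ℝ)+3))
      ≤ l2norm (dlap (conv u f)) / l2norm f := by
  set L : ℕ := M + 2*n + 3 with hLdef
  set c : ℝ := r₀ * ‖Complex.exp (Complex.I * (ξ₀:ℂ)) - 1‖^2 with hcdef
  have hc0 : 0 ≤ c := by positivity
  set f : ℤ → ℂ := fun k =>
    if 0 ≤ k ∧ k < (L:ℤ) then Complex.exp (Complex.I * (k:ℂ) * (ξ₀:ℂ)) else 0 with hfdef
  have hfsupp : ∀ k ∉ Finset.Icc (0:ℤ) ((L:ℤ)-1), f k = 0 := by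
    intro k hk
    rw [Finset.mem_Icc] at hk
    rw [hfdef]
    simp only []
    rw [if_neg (by omega)]
  have hfval : ∀ k : ℤ, 0 ≤ k → k < (L:ℤ) →
      f k = Complex.exp (Complex.I * (k:ℂ) * (ξ₀:ℂ)) := by
    intro k h1 h2
    rw [hfdef]
    simp only []
    rw [if_pos ⟨h1, h2⟩]
  have hnormexp : ∀ k : ℤ, ‖Complex.exp (Complex.I * (k:ℂ) * (ξ₀:ℂ))‖ = 1 := by
    intro k
    apply norm_exp_re_zero
    simp [Complex.mul_re, Complex.mul_im]
  have hsummf : Summable (fun k : ℤ => ‖f k‖^2) := by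
    apply summable_of_ne_finset_zero (s := Finset.Icc (0:ℤ) ((L:ℤ)-1))
    intro k hk
    rw [hfsupp k hk]
    simp
  have hmemf : Memℓp f 2 := by
    apply memℓp_gen
    have h2t : ((2:ENNReal)).toReal = 2 := by norm_num
    have heq : (fun i : ℤ => ‖f i‖ ^ ((2:ENNReal)).toReal) = (fun i : ℤ => ‖f i‖^(2:ℕ)) := by
      funext i
      rw [h2t, ← Real.rpow_natCast]
      norm_num
    rw [heq]
    exact hsummf
  have hLpos : (0:ℝ) < L := by positivity
  have hl2f : l2norm f = Real.sqrt L := by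
    rw [l2norm]
    congr 1
    rw [tsum_eq_sum (s := Finset.Icc (0:ℤ) ((L:ℤ)-1))
      (fun k hk => by rw [hfsupp k hk]; simp)]
    have hval : ∀ k ∈ Finset.Icc (0:ℤ) ((L:ℤ)-1), ‖f k‖^2 = 1 := by
      intro k hk
      rw [Finset.mem_Icc] at hk
      rw [hfval k hk.1 (by omega), hnormexp]
      norm_num
    rw [Finset.sum_congr rfl hval, Finset.sum_const, Int.card_Icc]
    simp
  have hfne : f ≠ 0 := by
    intro h
    have h0 := congrFun h 0
    rw [hfval 0 le_rfl (by positivity)] at h0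
    simp at h0
  -- middle values of the convolution
  have hconv_mid : ∀ m : ℤ, (n:ℤ) ≤ m → m ≤ (L:ℤ)-1-(n:ℤ) →
      conv u f m = Complex.exp (Complex.I * (m:ℂ) * (ξ₀:ℂ)) * (r₀:ℂ) := by
    intro m h1 h2
    rw [conv_eq_sum n u hsupp]
    have hterm : ∀ k ∈ Finset.Icc (-(n:ℤ)) (n:ℤ),
        (u k : ℂ) * f (m - k)
        = Complex.exp (Complex.I * (m:ℂ) * (ξ₀:ℂ)) *
            ((u k : ℂ) * Complex.exp (-(Complex.I) * (k:ℂ) * (ξ₀:ℂ))) := by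
      intro k hk
      rw [Finset.mem_Icc] at hk
      rw [hfval (m - k) (by omega) (by omega)]
      rw [show Complex.exp (Complex.I * ((m - k : ℤ):ℂ) * (ξ₀:ℂ))
          = Complex.exp (Complex.I * (m:ℂ) * (ξ₀:ℂ)) *
            Complex.exp (-(Complex.I) * (k:ℂ) * (ξ₀:ℂ)) by
        rw [← Complex.exp_add]
        congr 1
        push_cast
        ring]
      ring
    rw [Finset.sum_congr rfl hterm, ← Finset.mul_sum, hFT]
  -- middle values of the Laplacian
  have hg_mid : ∀ m ∈ Finset.Icc (n:ℤ) ((n:ℤ)+(M:ℤ)), ‖dlap (conv u f) m‖^2 = c^2 := by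
    intro m hm
    rw [Finset.mem_Icc] at hm
    have hL' : ((L:ℤ)) = (M:ℤ) + 2*(n:ℤ) + 3 := by rw [hLdef]; push_cast; ring
    have e0 := hconv_mid m (by omega) (by omega)
    have e1 := hconv_mid (m+1) (by omega) (by omega)
    have e2 := hconv_mid (m+2) (by omega) (by omega)
    have hdlap : dlap (conv u f) m
        = conv u f (m+2) - 2 * conv u f (m+1) + conv u f m := rfl
    rw [hdlap, e0, e1, e2]
    have hq1 : Complex.exp (Complex.I * ((m+1 : ℤ):ℂ) * (ξ₀:ℂ))
        = Complex.exp (Complex.I * (m:ℂ) * (ξ₀:ℂ)) * Complex.exp (Complex.I * (ξ₀:ℂ)) := by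
      rw [← Complex.exp_add]; congr 1; push_cast; ring
    have hq2 : Complex.exp (Complex.I * ((m+2 : ℤ):ℂ) * (ξ₀:ℂ))
        = Complex.exp (Complex.I * (m:ℂ) * (ξ₀:ℂ)) *
            (Complex.exp (Complex.I * (ξ₀:ℂ)) * Complex.exp (Complex.I * (ξ₀:ℂ))) := by
      rw [← Complex.exp_add, ← Complex.exp_add]; congr 1; push_cast; ring
    rw [hq1, hq2]
    rw [show Complex.exp (Complex.I * (m:ℂ) * (ξ₀:ℂ)) *
          (Complex.exp (Complex.I * (ξ₀:ℂ)) * Complex.exp (Complex.I * (ξ₀:ℂ))) * (r₀:ℂ)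
        - 2 * (Complex.exp (Complex.I * (m:ℂ) * (ξ₀:ℂ)) * Complex.exp (Complex.I * (ξ₀:ℂ)) * (r₀:ℂ))
        + Complex.exp (Complex.I * (m:ℂ) * (ξ₀:ℂ)) * (r₀:ℂ)
        = Complex.exp (Complex.I * (m:ℂ) * (ξ₀:ℂ)) * (r₀:ℂ) *
            (Complex.exp (Complex.I * (ξ₀:ℂ)) - 1)^2 by ring]
    rw [norm_mul, norm_mul, norm_pow, hnormexp]
    rw [Complex.norm_real, Real.norm_eq_abs, _root_.abs_of_nonneg hr₀]
    rw [hcdef]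
    ring
  -- support of the Laplacian
  have hconv0 : ∀ m : ℤ, (m < -(n:ℤ) ∨ (L:ℤ)-1+(n:ℤ) < m) → conv u f m = 0 := by
    intro m hm
    rw [conv_eq_sum n u hsupp]
    apply Finset.sum_eq_zero
    intro k hk
    rw [Finset.mem_Icc] at hk
    rw [hfsupp (m - k) (by rw [Finset.mem_Icc]; omega)]
    simp
  have hgsupp : ∀ m ∉ Finset.Icc (-(n:ℤ)-2) ((L:ℤ)+(n:ℤ)), dlap (conv u f) m = 0 := by
    intro m hm
    rw [Finset.mem_Icc] at hm
    have hdlap : dlap (conv u f) m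
        = conv u f (m+2) - 2 * conv u f (m+1) + conv u f m := rfl
    rw [hdlap, hconv0 (m+2) (by omega), hconv0 (m+1) (by omega), hconv0 m (by omega)]
    ring
  have hsummg : Summable (fun m : ℤ => ‖dlap (conv u f) m‖^2) := by
    apply summable_of_ne_finset_zero (s := Finset.Icc (-(n:ℤ)-2) ((L:ℤ)+(n:ℤ)))
    intro m hm
    rw [hgsupp m hm]
    simp
  -- lower bound for l2norm of the Laplacian
  have hl2g : Real.sqrt (((M:ℝ)+1) * c^2) ≤ l2norm (dlap (conv u f)) := by
    rw [l2norm]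
    apply Real.sqrt_le_sqrt
    have hsum : ∑ m ∈ Finset.Icc (n:ℤ) ((n:ℤ)+(M:ℤ)), ‖dlap (conv u f) m‖^2
        = ((M:ℝ)+1) * c^2 := by
      rw [Finset.sum_congr rfl hg_mid, Finset.sum_const, Int.card_Icc]
      have : ((n:ℤ) + (M:ℤ) + 1 - (n:ℤ)).toNat = M + 1 := by omega
      rw [this]
      push_cast
      ring
    rw [← hsum]
    exact Summable.sum_le_tsum _ (fun m _ => by positivity) hsummg
  refine ⟨f, hmemf, hfne, ?_⟩
  have hLcast : ((L:ℕ):ℝ) = (M:ℝ)+2*(n:ℝ)+3 := by rw [hLdef]; push_cast; ring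
  have hfin : c * Real.sqrt (((M:ℝ)+1)/((M:ℝ)+2*(n:ℝ)+3))
      = Real.sqrt (((M:ℝ)+1) * c^2) / Real.sqrt ((M:ℝ)+2*(n:ℝ)+3) := by
    rw [Real.sqrt_div (by positivity) _, Real.sqrt_mul (by positivity), Real.sqrt_sq hc0]
    ring
  rw [hfin, hl2f, hLcast]
  gcongr

private lemma l2norm_eq_lp_norm (f : ℤ → ℂ) (hf : Memℓp f 2) :
    l2norm f = ‖(⟨f, hf⟩ : lp (fun _ : ℤ => ℂ) 2)‖ := by
  rw [lp.norm_eq_tsum_rpow (by norm_num : 0 < ((2:ENNReal)).toReal)]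
  have hcoe : ⇑(⟨f, hf⟩ : lp (fun _ : ℤ => ℂ) 2) = f := rfl
  rw [hcoe, l2norm, Real.sqrt_eq_rpow]
  have h2t : ((2:ENNReal)).toReal = 2 := by norm_num
  rw [h2t]
  congr 1
  apply tsum_congr
  intro k
  rw [← Real.rpow_natCast ‖f k‖ 2]
  norm_num

private lemma memℓp_trans (a : ℤ) (f : ℤ → ℂ) (hf : Memℓp f 2) :
    Memℓp (fun m => f (m - a)) 2 := by
  apply memℓp_gen
  have hs := hf.summable (by norm_num : 0 < ((2:ENNReal)).toReal)
  exact ((Equiv.subRight a).summable_iff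
    (f := fun i => ‖f i‖ ^ ((2:ENNReal)).toReal)).mpr hs

private lemma l2norm_trans (a : ℤ) (f : ℤ → ℂ) :
    l2norm (fun m => f (m - a)) = l2norm f := by
  rw [l2norm, l2norm]
  congr 1
  exact (Equiv.subRight a).tsum_eq (fun k => ‖f k‖^2)

private lemma memℓp_fun_sum {ι : Type*} (s : Finset ι) (F : ι → ℤ → ℂ)
    (h : ∀ i ∈ s, Memℓp (F i) 2) : Memℓp (fun m => ∑ i ∈ s, F i m) 2 := by
  classical
  induction s using Finset.induction_on with
  | empty =>
    have : (fun m : ℤ => ∑ i ∈ (∅ : Finset ι), F i m) = (0 : ℤ → ℂ) := by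
      funext m; simp
    rw [this]
    exact zero_memℓp
  | insert a s hnot ih =>
    have heq : (fun m : ℤ => ∑ i ∈ insert a s, F i m)
        = F a + (fun m : ℤ => ∑ i ∈ s, F i m) := by
      funext m
      simp [Finset.sum_insert hnot]
    rw [heq]
    exact (h a (Finset.mem_insert_self a s)).add
      (ih (fun i hi => h i (Finset.mem_insert_of_mem hi)))

private lemma bddAbove_ratio (n : ℕ) (u : ℤ → ℝ)
    (hsupp : ∀ k : ℤ, (n : ℤ) < |k| → u k = 0) :
    BddAbove {r : ℝ | ∃ f : ℤ → ℂ, Memℓp f 2 ∧ f ≠ 0 ∧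
      r = l2norm (dlap (conv u f)) / l2norm f} := by
  use 4 * ∑ k ∈ Finset.Icc (-(n:ℤ)) (n:ℤ), |u k|
  rintro r ⟨f, hf, hf0, rfl⟩
  have hτ : ∀ a : ℤ, Memℓp (fun m => f (m - a)) 2 := fun a => memℓp_trans a f hf
  set φ : ℤ → ℤ → ℂ := fun k => fun m => f (m+2-k) - 2 * f (m+1-k) + f (m-k) with hφdef
  have hφeq : ∀ k : ℤ, φ k = ((fun m => f (m - (k-2))) - (2:ℂ) • (fun m => f (m - (k-1))))
      + (fun m => f (m - k)) := by
    intro k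
    funext m
    have i1 : m - (k-2) = m+2-k := by ring
    have i2 : m - (k-1) = m+1-k := by ring
    simp only [hφdef, Pi.add_apply, Pi.sub_apply, Pi.smul_apply, smul_eq_mul, i1, i2]
  have hφmem : ∀ k : ℤ, Memℓp (φ k) 2 := by
    intro k
    rw [hφeq k]
    exact ((hτ (k-2)).sub ((hτ (k-1)).const_smul (2:ℂ))).add (hτ k)
  have hτnorm : ∀ a : ℤ, ‖(⟨fun m => f (m - a), hτ a⟩ : lp (fun _ : ℤ => ℂ) 2)‖
      = l2norm f := by
    intro a
    rw [← l2norm_eq_lp_norm _ (hτ a), l2norm_trans]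
  have hφnorm : ∀ k : ℤ, ‖(⟨φ k, hφmem k⟩ : lp (fun _ : ℤ => ℂ) 2)‖ ≤ 4 * l2norm f := by
    intro k
    have hel : (⟨φ k, hφmem k⟩ : lp (fun _ : ℤ => ℂ) 2)
        = (⟨fun m => f (m - (k-2)), hτ _⟩ - (2:ℂ) • ⟨fun m => f (m - (k-1)), hτ _⟩
            + ⟨fun m => f (m - k), hτ _⟩ : lp (fun _ : ℤ => ℂ) 2) := by
      apply Subtype.ext
      exact hφeq k
    rw [hel]
    calc ‖(⟨fun m => f (m - (k-2)), hτ _⟩ - (2:ℂ) • ⟨fun m => f (m - (k-1)), hτ _⟩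
            + ⟨fun m => f (m - k), hτ _⟩ : lp (fun _ : ℤ => ℂ) 2)‖
        ≤ ‖(⟨fun m => f (m - (k-2)), hτ _⟩ - (2:ℂ) • ⟨fun m => f (m - (k-1)), hτ _⟩ :
            lp (fun _ : ℤ => ℂ) 2)‖ + ‖(⟨fun m => f (m - k), hτ _⟩ : lp (fun _ : ℤ => ℂ) 2)‖ :=
          norm_add_le _ _
      _ ≤ (‖(⟨fun m => f (m - (k-2)), hτ _⟩ : lp (fun _ : ℤ => ℂ) 2)‖
            + ‖((2:ℂ) • ⟨fun m => f (m - (k-1)), hτ _⟩ : lp (fun _ : ℤ => ℂ) 2)‖)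
            + ‖(⟨fun m => f (m - k), hτ _⟩ : lp (fun _ : ℤ => ℂ) 2)‖ := by
          gcongr
          exact norm_sub_le _ _
      _ ≤ 4 * l2norm f := by
          rw [norm_smul, hτnorm, hτnorm, hτnorm]
          simp [Complex.norm_ofNat]
          nlinarith [Real.sqrt_nonneg (∑' k : ℤ, ‖f k‖ ^ 2), l2norm_eq_lp_norm f hf]
  -- decomposition of the Laplacian of the convolution
  have hgfun : dlap (conv u f) = fun m => ∑ k ∈ Finset.Icc (-(n:ℤ)) (n:ℤ),
      (u k : ℂ) * φ k m := by
    funext m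
    show conv u f (m+2) - 2 * conv u f (m+1) + conv u f m = _
    rw [conv_eq_sum n u hsupp f (m+2), conv_eq_sum n u hsupp f (m+1),
      conv_eq_sum n u hsupp f m]
    rw [Finset.mul_sum, ← Finset.sum_sub_distrib, ← Finset.sum_add_distrib]
    apply Finset.sum_congr rfl
    intro k _
    simp only [hφdef]
    ring
  have hgmem : Memℓp (dlap (conv u f)) 2 := by
    rw [hgfun]
    apply memℓp_fun_sum
    intro k _
    exact (hφmem k).const_smul ((u k : ℂ))
  have hGeq : (⟨dlap (conv u f), hgmem⟩ : lp (fun _ : ℤ => ℂ) 2)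
      = ∑ k ∈ Finset.Icc (-(n:ℤ)) (n:ℤ), ((u k : ℂ) • (⟨φ k, hφmem k⟩ : lp (fun _ : ℤ => ℂ) 2)) := by
    apply Subtype.ext
    show dlap (conv u f) = (↑(∑ k ∈ Finset.Icc (-(n:ℤ)) (n:ℤ),
        ((u k : ℂ) • (⟨φ k, hφmem k⟩ : lp (fun _ : ℤ => ℂ) 2))) : ℤ → ℂ)
    have hcoe : (↑(∑ k ∈ Finset.Icc (-(n:ℤ)) (n:ℤ),
        ((u k : ℂ) • (⟨φ k, hφmem k⟩ : lp (fun _ : ℤ => ℂ) 2))) : ℤ → ℂ)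
        = ∑ k ∈ Finset.Icc (-(n:ℤ)) (n:ℤ), (u k : ℂ) • φ k := by
      rw [lp.coeFn_sum]
      apply Finset.sum_congr rfl
      intro k _
      rfl
    rw [hcoe, hgfun]
    funext m
    simp [smul_eq_mul]
  -- the norm bound
  have hnormg : l2norm (dlap (conv u f))
      ≤ (4 * ∑ k ∈ Finset.Icc (-(n:ℤ)) (n:ℤ), |u k|) * l2norm f := by
    rw [l2norm_eq_lp_norm _ hgmem, hGeq]
    calc ‖∑ k ∈ Finset.Icc (-(n:ℤ)) (n:ℤ), ((u k : ℂ) • (⟨φ k, hφmem k⟩ : lp (fun _ : ℤ => ℂ) 2))‖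
        ≤ ∑ k ∈ Finset.Icc (-(n:ℤ)) (n:ℤ), ‖(u k : ℂ) • (⟨φ k, hφmem k⟩ : lp (fun _ : ℤ => ℂ) 2)‖ :=
          norm_sum_le _ _
      _ ≤ ∑ k ∈ Finset.Icc (-(n:ℤ)) (n:ℤ), |u k| * (4 * l2norm f) := by
          apply Finset.sum_le_sum
          intro k _
          rw [norm_smul, Complex.norm_real, Real.norm_eq_abs]
          exact mul_le_mul_of_nonneg_left (hφnorm k) (abs_nonneg _)
      _ = (4 * ∑ k ∈ Finset.Icc (-(n:ℤ)) (n:ℤ), |u k|) * l2norm f := by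
          rw [← Finset.sum_mul]
          ring
  -- positivity of l2norm f
  have hfpos : 0 < l2norm f := by
    rw [l2norm_eq_lp_norm f hf]
    rw [norm_pos_iff]
    intro h
    apply hf0
    have := congrArg Subtype.val h
    exact this
  rw [div_le_iff₀ hfpos]
  exact hnormg

end Aux

theorem smoothest_average_laplacian_lower_bound
    (n : ℕ) (hn : 1 ≤ n) (u : ℤ → ℝ)
    (hsupp : ∀ k : ℤ, (n : ℤ) < |k| → u k = 0)
    (hsymm : ∀ k : ℤ, u (-k) = u k)
    (hnorm : ∑ k ∈ Finset.Icc (-(n : ℤ)) (n : ℤ), u k = 1)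
    (hFTpos : ∀ ξ : ℝ, ∃ r : ℝ, 0 ≤ r ∧
      ∑ k ∈ Finset.Icc (-(n : ℤ)) (n : ℤ),
        (u k : ℂ) * Complex.exp (-(Complex.I) * (k : ℂ) * (ξ : ℂ)) = (r : ℂ)) :
    (4 : ℝ) / ((n : ℝ) + 1) ^ 2 ≤
      sSup {r : ℝ | ∃ f : ℤ → ℂ, Memℓp f 2 ∧ f ≠ 0 ∧
        r = l2norm (dlap (conv u f)) / l2norm f} := by
  obtain ⟨ξ₀, r₀, hr₀, hFT, hgood⟩ := exists_good_node n u hsupp hnorm hFTpos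
  set S := {r : ℝ | ∃ f : ℤ → ℂ, Memℓp f 2 ∧ f ≠ 0 ∧
      r = l2norm (dlap (conv u f)) / l2norm f} with hSdef
  have hbdd : BddAbove S := bddAbove_ratio n u hsupp
  set c : ℝ := r₀ * ‖Complex.exp (Complex.I * (ξ₀:ℂ)) - 1‖^2 with hcdef
  have hmem : ∀ M : ℕ, c * Real.sqrt (((M:ℝ)+1)/((M:ℝ)+2*(n:ℝ)+3)) ≤ sSup S := by
    intro M
    obtain ⟨f, h1, h2, h3⟩ := test_ratio n u hsupp ξ₀ r₀ hr₀ hFT M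
    exact h3.trans (le_csSup hbdd ⟨f, h1, h2, rfl⟩)
  have hdenom : Filter.Tendsto (fun M : ℕ => (M:ℝ)+2*(n:ℝ)+3) Filter.atTop Filter.atTop := by
    apply Filter.tendsto_atTop_add_const_right
    apply Filter.tendsto_atTop_add_const_right
    exact tendsto_natCast_atTop_atTop
  have ha : Filter.Tendsto (fun M : ℕ => (2*(n:ℝ)+2)/((M:ℝ)+2*(n:ℝ)+3))
      Filter.atTop (nhds 0) := Filter.Tendsto.div_atTop tendsto_const_nhds hdenom
  have h1 : Filter.Tendsto (fun M : ℕ => ((M:ℝ)+1)/((M:ℝ)+2*(n:ℝ)+3))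
      Filter.atTop (nhds 1) := by
    have heq : (fun M : ℕ => ((M:ℝ)+1)/((M:ℝ)+2*(n:ℝ)+3))
        = (fun M : ℕ => 1 - (2*(n:ℝ)+2)/((M:ℝ)+2*(n:ℝ)+3)) := by
      funext M
      have hd : (M:ℝ)+2*(n:ℝ)+3 ≠ 0 := by positivity
      field_simp
      ring
    rw [heq]
    have h2 : Filter.Tendsto (fun _ : ℕ => (1:ℝ)) Filter.atTop (nhds 1) := tendsto_const_nhds
    have h3 := h2.sub ha
    simpa using h3
  have htend : Filter.Tendsto (fun M : ℕ => c * Real.sqrt (((M:ℝ)+1)/((M:ℝ)+2*(n:ℝ)+3)))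
      Filter.atTop (nhds (c * Real.sqrt 1)) :=
    Filter.Tendsto.mul tendsto_const_nhds (Filter.Tendsto.sqrt h1)
  have hle : c * Real.sqrt 1 ≤ sSup S :=
    le_of_tendsto htend (Filter.Eventually.of_forall hmem)
  rw [Real.sqrt_one, mul_one] at hle
  calc (4 : ℝ) / ((n : ℝ) + 1) ^ 2 ≤ ‖Complex.exp (Complex.I * (ξ₀:ℂ)) - 1‖^2 * r₀ := hgood
    _ = c := by rw [hcdef]; ring
    _ ≤ sSup S := hle
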